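/- If G is an (n,k)-graph with n ≥ 2, then G is an (n-2, k+1)-graph. -/

import Mathlib

/-- A graph `G` is `k`-extendable if it has a perfect matching and every matching
consisting of `k` pairwise disjoint edges extends to a perfect matching. -/
def SimpleGraph.IsKExtendable {V : Type*} [Fintype V] (G : SimpleGraph V) (k : ℕ) : Prop :=
  (∃ M : G.Subgraph, M.IsPerfectMatching) ∧
  ∀ M : G.Subgraph, M.IsMatching → M.edgeSet.ncard = k →
    ∃ P : G.Subgraph, P.IsPerfectMatching ∧ M ≤ P

/-- A graph `G` is an `(n,k)`-graph if `|G| ≥ n + 2k + 2`, `|G| ≡ n (mod 2)`, and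
deleting any `n` vertices leaves a `k`-extendable graph. -/
def SimpleGraph.IsNKGraph {V : Type*} [Fintype V] [DecidableEq V]
    (G : SimpleGraph V) (n k : ℕ) : Prop :=
  n + 2 * k + 2 ≤ Fintype.card V ∧ Fintype.card V % 2 = n % 2 ∧
  ∀ S : Finset V, S.card = n →
    SimpleGraph.IsKExtendable (G.induce ((Sᶜ : Finset V) : Set V)) k


namespace NKAux
open SimpleGraph

variable {V : Type*} {G : SimpleGraph V}

/-- Pull a subgraph of `G` back to a subgraph of the induced graph on `A`. -/
def pull (A : Set V) (N : G.Subgraph) : (G.induce A).Subgraph where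
  verts := Subtype.val ⁻¹' N.verts
  Adj a b := N.Adj ↑a ↑b
  adj_sub h := N.adj_sub h
  edge_vert h := N.edge_vert h
  symm := ⟨fun a b h => N.adj_symm h⟩

/-- Push a subgraph of an induced graph to a subgraph of `G`. -/
def push (A : Set V) (M : (G.induce A).Subgraph) : G.Subgraph where
  verts := Subtype.val '' M.verts
  Adj a b := ∃ (ha : a ∈ A) (hb : b ∈ A), M.Adj ⟨a, ha⟩ ⟨b, hb⟩
  adj_sub := fun ⟨_, _, h⟩ => M.adj_sub h
  edge_vert := fun ⟨ha, _, h⟩ => ⟨_, M.edge_vert h, rfl⟩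
  symm := ⟨fun a b ⟨ha, hb, h⟩ => ⟨hb, ha, M.adj_symm h⟩⟩

/-- Cut two matched vertices out of a subgraph. -/
def cut (N : G.Subgraph) (u v : V) : G.Subgraph where
  verts := N.verts \ {u, v}
  Adj a b := N.Adj a b ∧ a ≠ u ∧ a ≠ v ∧ b ≠ u ∧ b ≠ v
  adj_sub h := N.adj_sub h.1
  edge_vert h := ⟨N.edge_vert h.1, by simp [h.2.1, h.2.2.1]⟩
  symm := ⟨fun a b h => ⟨N.adj_symm h.1, h.2.2.2.1, h.2.2.2.2, h.2.1, h.2.2.1⟩⟩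

lemma pull_push (A : Set V) (M : (G.induce A).Subgraph) : pull A (push A M) = M := by
  ext a b
  · constructor
    · rintro ⟨x, hx, hxa⟩
      rwa [show a = x from Subtype.ext hxa.symm]
    · intro hx; exact ⟨a, hx, rfl⟩
  · constructor
    · rintro ⟨ha, hb, h⟩
      simpa using h
    · intro h; exact ⟨a.2, b.2, by simpa using h⟩

lemma push_matching {A : Set V} {M : (G.induce A).Subgraph} (hM : M.IsMatching) :
    (push A M).IsMatching := by
  rintro x ⟨a, ha, rfl⟩
  obtain ⟨b, hb, hub⟩ := hM ha
  refine ⟨↑b, ⟨a.2, b.2, by simpa using hb⟩, ?_⟩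
  rintro w ⟨hw1, hw2, hadj⟩
  have := hub ⟨w, hw2⟩ (by simpa using hadj)
  exact congrArg Subtype.val this

lemma pull_matching {A : Set V} {N : G.Subgraph} (hN : N.IsMatching)
    (hA : ∀ ⦃a b⦄, N.Adj a b → b ∈ A) : (pull A N).IsMatching := by
  rintro a ha
  obtain ⟨b, hb, hub⟩ := hN ha
  refine ⟨⟨b, hA hb⟩, hb, ?_⟩
  rintro w hw
  exact Subtype.ext (hub ↑w hw)

lemma pull_mono {A : Set V} {N N' : G.Subgraph} (h : N ≤ N') : pull A N ≤ pull A N' :=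
  ⟨fun a ha => h.1 ha, fun _ _ hab => h.2 hab⟩

lemma pull_edgeSet_ncard {A : Set V} {N : G.Subgraph}
    (hA : ∀ ⦃a b⦄, N.Adj a b → a ∈ A) :
    (pull A N).edgeSet.ncard = N.edgeSet.ncard := by
  have himg : Sym2.map (Subtype.val : A → V) '' (pull A N).edgeSet = N.edgeSet := by
    ext e
    induction e with
    | _ x y =>
      constructor
      · rintro ⟨e', he', he⟩
        induction e' with
        | _ a b =>
          simp only [Sym2.map_pair_eq] at he
          rw [← he]
          exact he'
      · intro he
        have hx : x ∈ A := hA he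
        have hy : y ∈ A := hA (N.adj_symm he)
        exact ⟨s(⟨x, hx⟩, ⟨y, hy⟩), he, rfl⟩
  rw [← himg]
  exact (Set.ncard_image_of_injective _ (Sym2.map.injective Subtype.val_injective)).symm

lemma cut_matching {N : G.Subgraph} {u v : V} (hN : N.IsMatching) (huv : N.Adj u v) :
    (cut N u v).IsMatching := by
  rintro a ⟨haV, ha⟩
  simp only [Set.mem_insert_iff, Set.mem_singleton_iff, not_or] at ha
  obtain ⟨b, hb, hub⟩ := hN haV
  have hbu : b ≠ u := by
    rintro rfl
    exact ha.2 ((hN (N.edge_vert huv)).unique (N.adj_symm hb) huv)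
  have hbv : b ≠ v := by
    rintro rfl
    exact ha.1 ((hN (N.edge_vert (N.adj_symm huv))).unique (N.adj_symm hb) (N.adj_symm huv))
  refine ⟨b, ⟨hb, ha.1, ha.2, hbu, hbv⟩, ?_⟩
  rintro w ⟨hw, _⟩
  exact hub w hw

lemma cut_edgeSet {N : G.Subgraph} {u v : V} (hN : N.IsMatching) (huv : N.Adj u v) :
    (cut N u v).edgeSet = N.edgeSet \ {s(u, v)} := by
  ext e
  induction e with
  | _ a b =>
    simp only [SimpleGraph.Subgraph.mem_edgeSet, Set.mem_diff, Set.mem_singleton_iff]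
    constructor
    · rintro ⟨h, hau, hav, hbu, hbv⟩
      refine ⟨h, fun he => ?_⟩
      rw [Sym2.eq_iff] at he
      rcases he with ⟨rfl, rfl⟩ | ⟨rfl, rfl⟩
      · exact hau rfl
      · exact hav rfl
    · rintro ⟨h, hne⟩
      have hau : a ≠ u := by
        rintro rfl
        exact hne (by rw [(hN (N.edge_vert huv)).unique h huv])
      have hav : a ≠ v := by
        rintro rfl
        have := (hN (N.edge_vert (N.adj_symm huv))).unique h (N.adj_symm huv)
        subst this; exact hne (Sym2.eq_swap)
      have hbu : b ≠ u := by
        rintro rfl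
        have := (hN (N.edge_vert huv)).unique (N.adj_symm h) huv
        subst this; exact hav rfl
      have hbv : b ≠ v := by
        rintro rfl
        have := (hN (N.edge_vert (N.adj_symm huv))).unique (N.adj_symm h) (N.adj_symm huv)
        subst this; exact hau rfl
      exact ⟨h, hau, hav, hbu, hbv⟩

/-- Key construction: a perfect matching of the graph induced on `A \ {u,v}` together with
the edge `uv` gives a perfect matching of the graph induced on `A`. -/
lemma key {A A' : Set V} {u v : V} (huA : u ∈ A) (hvA : v ∈ A)
    (huv : G.Adj u v) (hA' : A' = A \ {u, v})
    {P' : (G.induce A').Subgraph} (hP' : P'.IsPerfectMatching) :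
    (pull A (push A' P' ⊔ G.subgraphOfAdj huv)).IsPerfectMatching := by
  have hmemA' : ∀ x, x ∈ A' ↔ x ∈ A ∧ x ≠ u ∧ x ≠ v := by
    intro x; rw [hA']; simp [not_or]
  constructor
  · rintro ⟨x, hxA⟩ _
    by_cases hxu : x = u
    · subst hxu
      refine ⟨⟨v, hvA⟩, Or.inr rfl, ?_⟩
      rintro ⟨w, hw⟩ (⟨hx1, _, _⟩ | hadj)
      · exact absurd ((hmemA' x).mp hx1).2.1 (by simp)
      · simp only [SimpleGraph.subgraphOfAdj] at hadj
        rw [Sym2.eq_iff] at hadj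
        rcases hadj with ⟨-, h2⟩ | ⟨-, h2⟩
        · exact Subtype.ext h2.symm
        · exact absurd h2.symm huv.ne
    · by_cases hxv : x = v
      · subst hxv
        refine ⟨⟨u, huA⟩, Or.inr (Sym2.eq_swap), ?_⟩
        rintro ⟨w, hw⟩ (⟨hx1, _, _⟩ | hadj)
        · exact absurd ((hmemA' x).mp hx1).2.2 (by simp)
        · simp only [SimpleGraph.subgraphOfAdj] at hadj
          rw [Sym2.eq_iff] at hadj
          rcases hadj with ⟨h1, -⟩ | ⟨h1, -⟩
          · exact absurd h1 huv.ne
          · exact Subtype.ext h1.symm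
      · have hxA' : x ∈ A' := (hmemA' x).mpr ⟨hxA, hxu, hxv⟩
        obtain ⟨b, hb, hub⟩ := hP'.1 (hP'.2 ⟨x, hxA'⟩)
        refine ⟨⟨↑b, ((hmemA' ↑b).mp b.2).1⟩, Or.inl ⟨hxA', b.2, by simpa using hb⟩, ?_⟩
        rintro ⟨w, hw⟩ (⟨hx1, hw1, hadj⟩ | hadj)
        · have hwb := hub ⟨w, hw1⟩ (by simpa using hadj)
          cases hwb
          rfl
        · exfalso
          simp only [SimpleGraph.subgraphOfAdj] at hadj
          rw [Sym2.eq_iff] at hadj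
          rcases hadj with ⟨rfl, _⟩ | ⟨_, rfl⟩
          · exact hxu rfl
          · exact hxv rfl
  · rintro ⟨x, hxA⟩
    by_cases hxu : x = u
    · exact Or.inr (by simp [SimpleGraph.subgraphOfAdj, hxu])
    · by_cases hxv : x = v
      · exact Or.inr (by simp [SimpleGraph.subgraphOfAdj, hxv])
      · exact Or.inl ⟨⟨x, (hmemA' x).mpr ⟨hxA, hxu, hxv⟩⟩, hP'.2 _, rfl⟩

end NKAux

open NKAux

theorem nkGraph_step {V : Type*} [Fintype V] [DecidableEq V]
    (G : SimpleGraph V) (n k : ℕ) (hn : 2 ≤ n) (h : G.IsNKGraph n k) :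
    G.IsNKGraph (n - 2) (k + 1) := by
  obtain ⟨hcard, hmod, hext⟩ := h
  refine ⟨by omega, by omega, ?_⟩
  intro S hS
  have hmemA : ∀ x : V, x ∈ ((Sᶜ : Finset V) : Set V) ↔ x ∉ S := fun x => by simp
  -- basic facts for inserting two vertices
  have hScard : ∀ u v : V, u ∉ S → v ∉ S → u ≠ v →
      (insert u (insert v S)).card = n := by
    intro u v hu hv huv
    rw [Finset.card_insert_of_notMem (by simp [hu, huv]),
      Finset.card_insert_of_notMem hv]
    omega
  have hA'eq : ∀ u v : V,
      ((((insert u (insert v S))ᶜ : Finset V) : Set V)) =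
        ((Sᶜ : Finset V) : Set V) \ {u, v} := by
    intro u v
    ext x
    simp only [Finset.coe_compl, Set.mem_compl_iff, Finset.mem_coe, Finset.mem_insert,
      Set.mem_diff, Set.mem_insert_iff, Set.mem_singleton_iff, not_or]
    tauto
  constructor
  · -- existence of a perfect matching
    obtain ⟨T, hTsub, hTcard⟩ := Finset.exists_subset_card_eq
      (show 2 ≤ (Sᶜ).card from by rw [Finset.card_compl]; omega)
    have hdisj : Disjoint S T := Finset.disjoint_left.mpr (by
      intro a haS haT
      exact (Finset.mem_compl.mp (hTsub haT)) haS)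
    have hS₀ : (S ∪ T).card = n := by
      rw [Finset.card_union_of_disjoint hdisj]; omega
    obtain ⟨P0, hP0⟩ := (hext (S ∪ T) hS₀).1
    have hne₀ : ((S ∪ T)ᶜ).Nonempty := Finset.card_pos.mp (by
      rw [Finset.card_compl, hS₀]; omega)
    obtain ⟨x₀, hx₀⟩ := hne₀
    have hx₀' : x₀ ∈ ((((S ∪ T)ᶜ) : Finset V) : Set V) := by simpa using hx₀
    obtain ⟨y, hy, -⟩ := hP0.1 (hP0.2 ⟨x₀, hx₀'⟩)
    have huv : G.Adj x₀ ↑y := P0.adj_sub hy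
    have hu : x₀ ∉ S := fun hx =>
      (Finset.mem_compl.mp hx₀) (Finset.mem_union_left _ hx)
    have hv : (↑y : V) ∉ S := by
      have := y.2
      simp only [Finset.coe_compl, Set.mem_compl_iff, Finset.mem_coe,
        Finset.mem_union] at this
      exact fun hs => this (Or.inl hs)
    obtain ⟨P1, hP1⟩ := (hext (insert x₀ (insert (↑y) S))
      (hScard _ _ hu hv huv.ne)).1
    exact ⟨_, key ((hmemA x₀).mpr hu) ((hmemA ↑y).mpr hv) huv (hA'eq _ _) hP1⟩
  · -- every (k+1)-matching extends
    intro M hM hMcard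
    obtain ⟨e, he⟩ : M.edgeSet.Nonempty :=
      Set.nonempty_of_ncard_ne_zero (by omega)
    obtain ⟨⟨u₀, v₀⟩, rfl⟩ := e.exists_rep
    have hMuv : M.Adj u₀ v₀ := he
    have hu : (↑u₀ : V) ∉ S := (hmemA _).mp u₀.2
    have hv : (↑v₀ : V) ∉ S := (hmemA _).mp v₀.2
    have huv : G.Adj ↑u₀ ↑v₀ := M.adj_sub hMuv
    have hne : (↑u₀ : V) ≠ ↑v₀ := huv.ne
    set A' : Set V := (((insert (↑u₀ : V) (insert (↑v₀ : V) S))ᶜ : Finset V) : Set V)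
      with hA'def
    have hA' : A' = ((Sᶜ : Finset V) : Set V) \ {↑u₀, ↑v₀} := hA'eq _ _
    have hNuv : (push _ M).Adj ↑u₀ ↑v₀ := ⟨u₀.2, v₀.2, by simpa using hMuv⟩
    have hN : (push _ M).IsMatching := push_matching hM
    have hN'M : (cut (push _ M) ↑u₀ ↑v₀).IsMatching := cut_matching hN hNuv
    have hNvertsA : (push _ M).verts ⊆ ((Sᶜ : Finset V) : Set V) := by
      rintro x ⟨a, _, rfl⟩; exact a.2
    have hN'A' : ∀ ⦃a b : V⦄, (cut (push _ M) ↑u₀ ↑v₀).Adj a b → a ∈ A' := by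
      intro a b hab
      rw [hA']
      refine ⟨hNvertsA ((cut (push _ M) ↑u₀ ↑v₀).edge_vert hab).1, ?_⟩
      simp only [Set.mem_insert_iff, Set.mem_singleton_iff, not_or]
      exact ⟨hab.2.1, hab.2.2.1⟩
    have hM' : (pull A' (cut (push _ M) ↑u₀ ↑v₀)).IsMatching :=
      pull_matching hN'M fun a b hab => hN'A' ((cut (push _ M) ↑u₀ ↑v₀).adj_symm hab)
    have hNcard : (push _ M).edgeSet.ncard = k + 1 := by
      have h2 := pull_edgeSet_ncard (A := ((Sᶜ : Finset V) : Set V))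
        (N := push _ M) (fun a b hab => hab.1)
      rw [pull_push] at h2
      rw [← h2, hMcard]
    have hM'card : (pull A' (cut (push _ M) ↑u₀ ↑v₀)).edgeSet.ncard = k := by
      rw [pull_edgeSet_ncard (fun a b hab => hN'A' hab), cut_edgeSet hN hNuv,
        Set.ncard_diff_singleton_of_mem (SimpleGraph.Subgraph.mem_edgeSet.mpr hNuv), hNcard]
      omega
    obtain ⟨P', hP', hMP'⟩ := (hext (insert (↑u₀ : V) (insert (↑v₀ : V) S))
      (hScard _ _ hu hv hne)).2 _ hM' hM'card
    have hPkey := key ((hmemA _).mpr hu) ((hmemA _).mpr hv) huv hA' hP'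
    refine ⟨_, hPkey, fun a ha => hPkey.2 a, ?_⟩
    intro a b hab
    show (push A' P' ⊔ G.subgraphOfAdj huv).Adj ↑a ↑b
    by_cases hau : a = u₀
    · subst hau
      have hbv : b = v₀ := (hM (M.edge_vert hMuv)).unique hab hMuv
      subst hbv
      exact Or.inr rfl
    · by_cases hav : a = v₀
      · subst hav
        have hbu : b = u₀ := (hM (M.edge_vert (M.adj_symm hMuv))).unique hab (M.adj_symm hMuv)
        subst hbu
        exact Or.inr Sym2.eq_swap
      · have hbu : b ≠ u₀ := by
          rintro rfl
          exact hav ((hM (M.edge_vert hMuv)).unique (M.adj_symm hab) hMuv)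
        have hbv : b ≠ v₀ := by
          rintro rfl
          exact hau ((hM (M.edge_vert (M.adj_symm hMuv))).unique (M.adj_symm hab) (M.adj_symm hMuv))
        have hN'ab : (cut (push _ M) ↑u₀ ↑v₀).Adj ↑a ↑b :=
          ⟨⟨a.2, b.2, by simpa using hab⟩,
            fun hh => hau (Subtype.ext hh), fun hh => hav (Subtype.ext hh),
            fun hh => hbu (Subtype.ext hh), fun hh => hbv (Subtype.ext hh)⟩
        have haA' : (↑a : V) ∈ A' := hN'A' hN'ab
        have hbA' : (↑b : V) ∈ A' :=
          hN'A' ((cut (push _ M) ↑u₀ ↑v₀).adj_symm hN'ab)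
        exact Or.inl ⟨haA', hbA', hMP'.2 hN'ab⟩
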